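/- Let p be an odd prime and let A be a 2×2 matrix over ℤ/p whose characteristic polynomial is irreducible over ℤ/p and whose trace is nonzero. Then for every 2×2 matrix B over ℤ/p, B² = A² holds if and only if B = A or B = −A. -/

import Mathlib

open Matrix Polynomial

lemma charpoly_fin_two' {R : Type*} [CommRing R] (M : Matrix (Fin 2) (Fin 2) R) :
    M.charpoly = X ^ 2 - C M.trace * X + C M.det := by
  rw [Matrix.charpoly, det_fin_two, charmatrix_apply_eq, charmatrix_apply_eq,
    charmatrix_apply_ne _ _ _ (by decide), charmatrix_apply_ne _ _ _ (by decide),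
    det_fin_two, trace_fin_two]
  simp only [map_add, _root_.map_mul, map_sub]
  ring

theorem sqrt_of_irreducible_charpoly_sq (p : ℕ) (hp : p.Prime) (hodd : Odd p)
    (A : Matrix (Fin 2) (Fin 2) (ZMod p)) (hirr : Irreducible A.charpoly)
    (htr : A.trace ≠ 0) (B : Matrix (Fin 2) (Fin 2) (ZMod p)) :
    B * B = A * A ↔ B = A ∨ B = -A := by
  haveI := Fact.mk hp
  haveI : NeZero p := ⟨hp.ne_zero⟩
  have h2 : (2 : ZMod p) ≠ 0 := by
    intro hzero
    have h22 : ((2 : ℕ) : ZMod p) = 0 := by exact_mod_cast hzero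
    have hdvd : p ∣ 2 := (ZMod.natCast_eq_zero_iff 2 p).mp h22
    have hpeq : p = 2 := (Nat.prime_dvd_prime_iff_eq hp Nat.prime_two).mp hdvd
    rw [hpeq] at hodd
    simp [Nat.odd_iff] at hodd
  have hroot : ∀ x : ZMod p, x ^ 2 - A.trace * x + A.det ≠ 0 := by
    intro x hx
    have hdvd : (X - C x) ∣ A.charpoly := by
      refine dvd_iff_isRoot.mpr ?_
      rw [charpoly_fin_two']
      simp [IsRoot, hx]
    obtain ⟨q, hq⟩ := hdvd
    rcases hirr.isUnit_or_isUnit hq with h | h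
    · exact (Polynomial.not_isUnit_X_sub_C x) h
    · have hdeg : A.charpoly.natDegree = 2 := by
        simp [A.charpoly_natDegree_eq_dim]
      have hq0 : q ≠ 0 := h.ne_zero
      have : A.charpoly.natDegree = 1 := by
        rw [hq, natDegree_mul (X_sub_C_ne_zero x) hq0, natDegree_X_sub_C,
          Polynomial.natDegree_eq_zero_of_isUnit h]
      omega
  rw [trace_fin_two] at htr
  simp only [trace_fin_two, det_fin_two] at hroot
  set a := A 0 0 with ha
  set b := A 0 1 with hb
  set c := A 1 0 with hc
  set d := A 1 1 with hd
  have hDisc : ∀ u : ZMod p, u ^ 2 ≠ (a - d) ^ 2 + 4 * (b * c) := by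
    intro u hu
    apply hroot ((a + d + u) * (2 : ZMod p)⁻¹)
    field_simp
    ring_nf
    linear_combination hu
  constructor
  · intro hB
    have E1 := congrFun (congrFun hB 0) 0
    have E2 := congrFun (congrFun hB 0) 1
    have E3 := congrFun (congrFun hB 1) 0
    have E4 := congrFun (congrFun hB 1) 1
    simp only [Matrix.mul_apply, Fin.sum_univ_two] at E1 E2 E3 E4
    set e := B 0 0 with he
    set f := B 0 1 with hf
    set g := B 1 0 with hg
    set h := B 1 1 with hh
    by_cases hT : e + h = 0
    · exfalso
      have hb0 : b = 0 := by
        have hbt : b * (a + d) = 0 := by linear_combination f * hT - E2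
        exact (mul_eq_zero.mp hbt).resolve_right htr
      apply hroot a
      linear_combination (-(c : ZMod p)) * hb0
    · set T := e + h with hTdef
      have hfT : f * T = b * (a + d) := by linear_combination E2
      have hgT : g * T = c * (a + d) := by linear_combination E3
      have hsT : (e - h) * T = (a - d) * (a + d) := by linear_combination E1 - E4
      have hR1 : 2 * e * T = T ^ 2 + (a - d) * (a + d) := by linear_combination hsT
      have hR2 : 4 * e ^ 2 * T ^ 2 = (T ^ 2 + (a - d) * (a + d)) ^ 2 := by
        linear_combination (2 * e * T + T ^ 2 + (a - d) * (a + d)) * hR1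
      have hfg : f * g * T ^ 2 = b * c * (a + d) ^ 2 := by
        linear_combination (f * T) * hgT + (c * (a + d)) * hfT
      have key : (T ^ 2 - (a + d) ^ 2) * (T ^ 2 - ((a - d) ^ 2 + 4 * (b * c))) = 0 := by
        linear_combination 4 * T ^ 2 * E1 - hR2 - 4 * hfg
      rcases mul_eq_zero.mp key with hk | hk
      · have hTt : (T - (a + d)) * (T + (a + d)) = 0 := by linear_combination hk
        rcases mul_eq_zero.mp hTt with hk2 | hk2
        · left
          have hea : e = a := by
            have : e * (2 * (a + d)) = a * (2 * (a + d)) := by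
              linear_combination hR1 + (T + (a + d) - 2 * e) * hk2
            exact mul_right_cancel₀ (mul_ne_zero h2 htr) this
          have hfb : f = b := by
            have : f * (a + d) = b * (a + d) := by linear_combination hfT - f * hk2
            exact mul_right_cancel₀ htr this
          have hgc : g = c := by
            have : g * (a + d) = c * (a + d) := by linear_combination hgT - g * hk2
            exact mul_right_cancel₀ htr this
          have hhd : h = d := by linear_combination hk2 - hea
          ext i j
          fin_cases i <;> fin_cases j <;> assumption
        · right
          have hea : e = -a := by
            have : e * (2 * (a + d)) = (-a) * (2 * (a + d)) := by
              linear_combination -hR1 + (2 * e - T + (a + d)) * hk2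
            exact mul_right_cancel₀ (mul_ne_zero h2 htr) this
          have hfb : f = -b := by
            have : f * (a + d) = (-b) * (a + d) := by linear_combination -hfT + f * hk2
            exact mul_right_cancel₀ htr this
          have hgc : g = -c := by
            have : g * (a + d) = (-c) * (a + d) := by linear_combination -hgT + g * hk2
            exact mul_right_cancel₀ htr this
          have hhd : h = -d := by linear_combination hk2 - hea
          ext i j
          fin_cases i <;> fin_cases j <;>
            simp only [Matrix.neg_apply] <;> assumption
      · exact absurd (by linear_combination hk : T ^ 2 = (a - d) ^ 2 + 4 * (b * c)) (hDisc T)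
  · rintro (rfl | rfl)
    · rfl
    · exact neg_mul_neg A A
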